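/- Assume r ≥ 3. For every integer l with 1 ≤ l ≤ r-2, the following identity holds in W: r_{r-1} · (r_0 r_1 ⋯ r_{r-1} r_r)^l = (r_0 r_1 ⋯ r_{r-1} r_r)^l · r_{r-l-1}. -/

import Mathlib

noncomputable section

open CoxeterSystem
open Fin.NatCast

/-- The Coxeter matrix of the affine Weyl group of type `Ã_{2r}`:
vertices `0, …, 2r` arranged in a cycle mod `N = 2r+1`; `m i j = 3` if
`i - j ≡ ±1 (mod N)`, `m i j = 2` for other off-diagonal pairs. -/
def affACoxeterMatrix (r : ℕ) : CoxeterMatrix (Fin (2 * r + 1)) where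
  M i j := if i = j then 1 else if i = j + 1 ∨ j = i + 1 then 3 else 2
  isSymm := by
    apply Matrix.IsSymm.ext
    intro i j
    by_cases h : j = i
    · subst h; rfl
    · rw [if_neg h, if_neg (fun hh : i = j => h hh.symm)]
      exact if_congr or_comm rfl rfl
  diagonal i := if_pos rfl
  off_diagonal i j h := by
    rw [if_neg h]
    split <;> omega

/-- The affine Weyl group `W` of type `Ã_{2r}`, as the Coxeter group of the above matrix. -/
abbrev AffW (r : ℕ) : Type := (affACoxeterMatrix r).Group

/-- The canonical Coxeter system on `AffW r`. -/
def affCS (r : ℕ) : CoxeterSystem (affACoxeterMatrix r) (AffW r) :=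
  (affACoxeterMatrix r).toCoxeterSystem

/-- The simple reflection `s i` (index taken mod `2r+1`). -/
def sgen (r i : ℕ) : AffW r := (affCS r).simple ((i : ℕ) : Fin (2 * r + 1))

/-- The word in the simple reflections representing the generator `r_i` of the
relative Weyl group: `r_0 = s_0`, `r_i = s_i s_{2r+1-i}` for `1 ≤ i ≤ r-1`,
`r_r = s_r s_{r+1} s_r`. -/
def rword (r : ℕ) : ℕ → List (Fin (2 * r + 1)) := fun i =>
  if i = 0 then [(0 : Fin (2 * r + 1))]
  else if i < r then [((i : ℕ) : Fin (2 * r + 1)), ((2 * r + 1 - i : ℕ) : Fin (2 * r + 1))]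
  else [((r : ℕ) : Fin (2 * r + 1)), ((r + 1 : ℕ) : Fin (2 * r + 1)), ((r : ℕ) : Fin (2 * r + 1))]

/-- The element `r_i` of `W`. -/
def rgen (r i : ℕ) : AffW r := (affCS r).wordProd (rword r i)

/-- The list `[a, a+1, …, b]` (empty if `b < a`). -/
def ascSeq (a b : ℕ) : List ℕ := List.range' a (b + 1 - a)

/-- The list `[b, b-1, …, a]` (empty if `b < a`). -/
def descSeq (a b : ℕ) : List ℕ := (List.range' a (b + 1 - a)).reverse

/-- The expansion, as a word in the simple reflections, of the block
`r_0 r_1 ⋯ r_{r-1} r_r r_{r-1} ⋯ r_k`. -/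
def blockWord (r k : ℕ) : List (Fin (2 * r + 1)) :=
  ((ascSeq 0 r ++ descSeq k (r - 1)).map (rword r)).flatten

/-- The element `r_0 r_1 ⋯ r_{r-1} r_r r_{r-1} ⋯ r_k` of `W`. -/
def blockEl (r k : ℕ) : AffW r := (affCS r).wordProd (blockWord r k)

/-- The expansion, as a word in the simple reflections, of
`ϖ_k = (r_0 r_1 ⋯ r_{r-1} r_r r_{r-1} ⋯ r_k)^k`. -/
def piWord (r k : ℕ) : List (Fin (2 * r + 1)) :=
  (List.replicate k (blockWord r k)).flatten

/-- The element `ϖ_k = (r_0 r_1 ⋯ r_{r-1} r_r r_{r-1} ⋯ r_k)^k` of `W`. -/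
def piEl (r k : ℕ) : AffW r := (affCS r).wordProd (piWord r k)

/-- The expansion of the full block `r_0 r_1 ⋯ r_{r-1} r_r` as a word. -/
def fullBlockWord (r : ℕ) : List (Fin (2 * r + 1)) :=
  ((ascSeq 0 r).map (rword r)).flatten

/-- The element `r_0 r_1 ⋯ r_{r-1} r_r` of `W`. -/
def fullBlockEl (r : ℕ) : AffW r := (affCS r).wordProd (fullBlockWord r)



-- general Coxeter lemmas
section General
variable {B W : Type*} [Group W] {M : CoxeterMatrix B} (cs : CoxeterSystem M W)

lemma comm_of_M_two (i j : B) (h : M i j = 2) :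
    cs.simple i * cs.simple j = cs.simple j * cs.simple i := by
  have h2 := cs.simple_mul_simple_pow i j
  rw [h] at h2
  have h2' : (cs.simple i * cs.simple j) * (cs.simple i * cs.simple j) = 1 := by
    rw [← sq]; exact h2
  have h3 := eq_inv_of_mul_eq_one_left h2'
  rw [mul_inv_rev, cs.inv_simple, cs.inv_simple] at h3
  exact h3

lemma braid_of_M_three (i j : B) (h : M i j = 3) :
    cs.simple i * cs.simple j * cs.simple i = cs.simple j * cs.simple i * cs.simple j := by
  have h3 := cs.simple_mul_simple_pow i j
  rw [h, pow_succ, pow_succ, pow_one] at h3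
  have key : (cs.simple i * cs.simple j * cs.simple i) *
      (cs.simple j * cs.simple i * cs.simple j) = 1 := by
    rw [← h3]; group
  have h4 := eq_inv_of_mul_eq_one_left key
  rw [mul_inv_rev, mul_inv_rev, cs.inv_simple, cs.inv_simple] at h4
  rw [h4, mul_assoc]

lemma comm_wordProd (g : W) (l : List B)
    (h : ∀ j ∈ l, g * cs.simple j = cs.simple j * g) :
    g * cs.wordProd l = cs.wordProd l * g := by
  induction l with
  | nil => simp
  | cons a t ih =>
    rw [cs.wordProd_cons, ← mul_assoc, h a (List.mem_cons_self), mul_assoc,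
      ih (fun j hj => h j (List.mem_cons_of_mem a hj)), ← mul_assoc]

end General

-- affine-specific lemmas
section Aff
variable {r : ℕ}

lemma cast_eq_cast_iff (a b : ℕ) :
    ((a : Fin (2*r+1)) = (b : Fin (2*r+1))) ↔ a % (2*r+1) = b % (2*r+1) := by
  rw [Fin.ext_iff, Fin.val_natCast, Fin.val_natCast]

lemma M_cast_eq_two {a b : ℕ} (ha : a ≤ 2*r) (hb : b ≤ 2*r)
    (h1 : a ≠ b) (h2 : a ≠ b+1) (h3 : b ≠ a+1)
    (h4 : ¬(a = 0 ∧ b = 2*r)) (h5 : ¬(b = 0 ∧ a = 2*r)) :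
    (affACoxeterMatrix r).M (a : Fin (2*r+1)) (b : Fin (2*r+1)) = 2 := by
  have key : ∀ x y : ℕ, x ≤ 2*r → y ≤ 2*r → x ≠ y + 1 → ¬(x = 0 ∧ y = 2*r) →
      ¬((x : Fin (2*r+1)) = (y : Fin (2*r+1)) + 1) := by
    intro x y hx hy hxy hx0 hc
    rw [show ((y : Fin (2*r+1)) + 1) = ((y+1 : ℕ) : Fin (2*r+1)) from (Nat.cast_add_one y).symm,
      cast_eq_cast_iff, Nat.mod_eq_of_lt (by omega)] at hc
    rcases Nat.lt_or_ge (y+1) (2*r+1) with hlt | hge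
    · rw [Nat.mod_eq_of_lt hlt] at hc; omega
    · rw [show y + 1 = 2*r+1 by omega, Nat.mod_self] at hc; omega
  show (if (a : Fin (2*r+1)) = (b : Fin (2*r+1)) then 1
    else if (a : Fin (2*r+1)) = (b : Fin (2*r+1)) + 1 ∨ (b : Fin (2*r+1)) = (a : Fin (2*r+1)) + 1
    then 3 else 2) = 2
  rw [if_neg, if_neg]
  · rintro (hc | hc)
    · exact key a b ha hb h2 h4 hc
    · exact key b a hb ha h3 h5 hc
  · intro hc
    rw [cast_eq_cast_iff, Nat.mod_eq_of_lt (by omega), Nat.mod_eq_of_lt (by omega)] at hc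
    exact h1 hc

lemma M_cast_eq_three {a b : ℕ} (hb : b ≤ 2*r) (hab : b = a + 1) :
    (affACoxeterMatrix r).M (a : Fin (2*r+1)) (b : Fin (2*r+1)) = 3 := by
  show (if (a : Fin (2*r+1)) = (b : Fin (2*r+1)) then 1
    else if (a : Fin (2*r+1)) = (b : Fin (2*r+1)) + 1 ∨ (b : Fin (2*r+1)) = (a : Fin (2*r+1)) + 1
    then 3 else 2) = 3
  rw [if_neg, if_pos]
  · right
    rw [hab, Nat.cast_add_one]
  · intro hc
    rw [cast_eq_cast_iff, Nat.mod_eq_of_lt (by omega), Nat.mod_eq_of_lt (by omega)] at hc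
    omega

lemma sgen_comm {a b : ℕ} (ha : a ≤ 2*r) (hb : b ≤ 2*r)
    (h1 : a ≠ b) (h2 : a ≠ b+1) (h3 : b ≠ a+1)
    (h4 : ¬(a = 0 ∧ b = 2*r)) (h5 : ¬(b = 0 ∧ a = 2*r)) :
    sgen r a * sgen r b = sgen r b * sgen r a :=
  comm_of_M_two (affCS r) _ _ (M_cast_eq_two ha hb h1 h2 h3 h4 h5)

lemma sgen_braid {a : ℕ} (ha : a + 1 ≤ 2*r) :
    sgen r a * sgen r (a+1) * sgen r a = sgen r (a+1) * sgen r a * sgen r (a+1) :=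
  braid_of_M_three (affCS r) _ _ (M_cast_eq_three ha rfl)

/-- the word `[↑a, ↑(a+1), …, ↑(a+n-1)]` in `Fin (2r+1)`. -/
def ascFin (r a n : ℕ) : List (Fin (2*r+1)) := (List.range' a n).map (Nat.cast)

lemma mem_ascFin {a n : ℕ} {x : Fin (2*r+1)} (hx : x ∈ ascFin r a n) :
    ∃ m, a ≤ m ∧ m < a + n ∧ x = (m : Fin (2*r+1)) := by
  simp only [ascFin, List.mem_map, List.mem_range'] at hx
  obtain ⟨m, ⟨i, hi, rfl⟩, rfl⟩ := hx
  exact ⟨a + 1*i, by omega, by omega, rfl⟩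

lemma ascFin_append (a m n : ℕ) :
    ascFin r a m ++ ascFin r (a+m) n = ascFin r a (n+m) := by
  rw [ascFin, ascFin, ascFin, ← List.map_append, List.range'_append_1, Nat.add_comm m n]

lemma ascFin_concat (a n : ℕ) :
    ascFin r a (n+1) = ascFin r a n ++ [((a+n : ℕ) : Fin (2*r+1))] := by
  rw [ascFin, ascFin, List.range'_1_concat, List.map_append]; rfl

lemma ascFin_cons (a n : ℕ) :
    ascFin r a (n+1) = ((a : ℕ) : Fin (2*r+1)) :: ascFin r (a+1) n := by
  rw [ascFin, ascFin, List.range'_succ]; rfl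

/-- commutes with the ascending word, given commutation with each letter -/
lemma comm_ascFin (g : AffW r) (a n : ℕ)
    (h : ∀ m, a ≤ m → m < a + n → g * sgen r m = sgen r m * g) :
    g * (affCS r).wordProd (ascFin r a n) = (affCS r).wordProd (ascFin r a n) * g := by
  apply comm_wordProd
  intro j hj
  obtain ⟨m, h1, h2, rfl⟩ := mem_ascFin hj
  exact h m h1 h2

lemma comm_ascFin_rev (g : AffW r) (a n : ℕ)
    (h : ∀ m, a ≤ m → m < a + n → g * sgen r m = sgen r m * g) :
    g * (affCS r).wordProd (ascFin r a n).reverse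
      = (affCS r).wordProd (ascFin r a n).reverse * g := by
  apply comm_wordProd
  intro j hj
  obtain ⟨m, h1, h2, rfl⟩ := mem_ascFin (List.mem_reverse.mp hj)
  exact h m h1 h2

/-- `A = s_0 s_1 ⋯ s_r` -/
def AEl (r : ℕ) : AffW r := (affCS r).wordProd (ascFin r 0 (r+1))

/-- `C = s_{2r} s_{2r-1} ⋯ s_{r+1} s_r` -/
def CEl (r : ℕ) : AffW r := (affCS r).wordProd ((ascFin r r (r+1)).reverse)

lemma ascFin_split (a b n : ℕ) (hab : a ≤ b) (hbn : b ≤ a + n) :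
    ascFin r a n = ascFin r a (b - a) ++ ascFin r b (a + n - b) := by
  have h := List.range'_append_1 (s := a) (m := b-a) (n := a+n-b)
  rw [show a + (b-a) = b from by omega, show (b-a)+(a+n-b) = n from by omega] at h
  rw [ascFin, ascFin, ascFin, ← List.map_append, h]

lemma ascFin_two (a : ℕ) :
    ascFin r a 2 = [((a : ℕ) : Fin (2*r+1)), ((a+1 : ℕ) : Fin (2*r+1))] := rfl

lemma wordProd_pair (a b : ℕ) :
    (affCS r).wordProd [((a : ℕ) : Fin (2*r+1)), ((b : ℕ) : Fin (2*r+1))]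
      = sgen r a * sgen r b := by
  rw [(affCS r).wordProd_cons, (affCS r).wordProd_cons, (affCS r).wordProd_nil, mul_one]
  rfl

lemma asc_shift (k : ℕ) (hr : 1 ≤ r) (hk : k + 1 ≤ r) :
    sgen r (k+1) * AEl r = AEl r * sgen r k := by
  have hsplit : ascFin r 0 (r+1) = ascFin r 0 k ++ (ascFin r k 2 ++ ascFin r (k+2) (r-1-k)) := by
    rw [ascFin_split 0 k (r+1) (by omega) (by omega), show k - 0 = k from by omega,
      show 0 + (r+1) - k = r+1-k from by omega,
      ascFin_split k (k+2) (r+1-k) (by omega) (by omega), show k+2-k = 2 from by omega,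
      show k + (r+1-k) - (k+2) = r-1-k from by omega]
  have hP := comm_ascFin (sgen r (k+1)) 0 k (fun m h1 h2 => sgen_comm (by omega) (by omega)
    (by omega) (by omega) (by omega) (by omega) (by omega))
  have hQ := comm_ascFin (sgen r k) (k+2) (r-1-k) (fun m h1 h2 => sgen_comm (by omega) (by omega)
    (by omega) (by omega) (by omega) (by omega) (by omega))
  have hB := sgen_braid (r := r) (a := k) (by omega)
  rw [AEl, hsplit, (affCS r).wordProd_append, (affCS r).wordProd_append, ascFin_two,
    wordProd_pair]
  set P := (affCS r).wordProd (ascFin r 0 k) with hPdef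
  set Q := (affCS r).wordProd (ascFin r (k+2) (r-1-k)) with hQdef
  set x := sgen r k with hxdef
  set y := sgen r (k+1) with hydef
  calc y * (P * ((x * y) * Q)) = (y * P) * ((x*y) * Q) := by group
  _ = (P * y) * ((x*y) * Q) := by rw [hP]
  _ = P * (y*x*y) * Q := by group
  _ = P * (x*y*x) * Q := by rw [hB]
  _ = (P * (x*y)) * (x * Q) := by group
  _ = (P * (x*y)) * (Q * x) := by rw [hQ]
  _ = (P * ((x * y) * Q)) * x := by group

lemma desc_shift (m : ℕ) (hm1 : r + 2 ≤ m) (hm2 : m + 1 ≤ 2*r) :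
    sgen r m * CEl r = CEl r * sgen r (m+1) := by
  have hsplit : ascFin r r (r+1) = ascFin r r (m-r) ++ (ascFin r m 2 ++ ascFin r (m+2) (2*r-1-m)) := by
    rw [ascFin_split r m (r+1) (by omega) (by omega),
      show r + (r+1) - m = r+1-(m-r) from by omega,
      ascFin_split m (m+2) (r+1-(m-r)) (by omega) (by omega), show m+2-m = 2 from by omega,
      show m + (r+1-(m-r)) - (m+2) = 2*r-1-m from by omega]
  have hR1 := comm_ascFin_rev (sgen r m) (m+2) (2*r-1-m) (fun i h1 h2 => sgen_comm (by omega)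
    (by omega) (by omega) (by omega) (by omega) (by omega) (by omega))
  have hR2 := comm_ascFin_rev (sgen r (m+1)) r (m-r) (fun i h1 h2 => sgen_comm (by omega)
    (by omega) (by omega) (by omega) (by omega) (by omega) (by omega))
  have hB := sgen_braid (r := r) (a := m) (by omega)
  rw [CEl, hsplit, List.reverse_append, List.reverse_append, (affCS r).wordProd_append,
    (affCS r).wordProd_append, ascFin_two, show ([((m:ℕ) : Fin (2*r+1)), ((m+1:ℕ) : Fin (2*r+1))]).reverse
      = [((m+1:ℕ) : Fin (2*r+1)), ((m:ℕ) : Fin (2*r+1))] from rfl, wordProd_pair]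
  set R1 := (affCS r).wordProd (ascFin r (m+2) (2*r-1-m)).reverse with hR1def
  set R2 := (affCS r).wordProd (ascFin r r (m-r)).reverse with hR2def
  set x := sgen r m with hxdef
  set y := sgen r (m+1) with hydef
  calc x * (R1 * (y * x) * R2) = (x * R1) * ((y*x) * R2) := by group
  _ = (R1 * x) * ((y*x) * R2) := by rw [hR1]
  _ = R1 * (x*y*x) * R2 := by group
  _ = R1 * (y*x*y) * R2 := by rw [hB]
  _ = (R1 * (y*x)) * (y * R2) := by group
  _ = (R1 * (y*x)) * (R2 * y) := by rw [hR2]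
  _ = (R1 * (y * x) * R2) * y := by group


lemma wordProd_single (a : ℕ) :
    (affCS r).wordProd [((a : ℕ) : Fin (2*r+1))] = sgen r a := by
  rw [(affCS r).wordProd_cons, (affCS r).wordProd_nil, mul_one]; rfl

lemma prefixP : ∀ j, j + 1 ≤ r →
    (affCS r).wordProd (((ascSeq 0 j).map (rword r)).flatten)
      = (affCS r).wordProd (ascFin r 0 (j+1)) *
        (affCS r).wordProd ((ascFin r (2*r+1-j) j).reverse) := by
  intro j
  induction j with
  | zero =>
    intro _
    have h0 : ascSeq 0 0 = [0] := rfl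
    have h1 : ascFin r 0 1 = [((0:ℕ) : Fin (2*r+1))] := rfl
    have h2 : ascFin r (2*r+1-0) 0 = ([] : List (Fin (2*r+1))) := rfl
    rw [h0, h1, h2]
    simp only [List.map_cons, List.map_nil, List.flatten_cons, List.flatten_nil,
      List.append_nil, List.reverse_nil, (affCS r).wordProd_nil, mul_one]
    rw [wordProd_single 0]
    congr 1
  | succ j ih =>
    intro hj
    have e1 : ascSeq 0 (j+1) = ascSeq 0 j ++ [j+1] := by
      rw [ascSeq, ascSeq, show j+1+1-0 = (j+1)+1 from rfl, List.range'_1_concat,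
        show j+1-0 = j+1 from rfl, show 0+(j+1) = j+1 from by omega]
    have hrw : rword r (j+1) = [((j+1 : ℕ) : Fin (2*r+1)), ((2*r-j : ℕ) : Fin (2*r+1))] := by
      simp only [rword]
      rw [if_neg (by omega), if_pos (by omega), show 2*r+1-(j+1) = 2*r-j from by omega]
    rw [e1, List.map_append, List.flatten_append, (affCS r).wordProd_append, ih (by omega)]
    simp only [List.map_cons, List.map_nil, List.flatten_cons, List.flatten_nil, List.append_nil]
    rw [hrw, wordProd_pair]
    have hA : (affCS r).wordProd (ascFin r 0 (j+2))
        = (affCS r).wordProd (ascFin r 0 (j+1)) * sgen r (j+1) := by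
      rw [ascFin_concat 0 (j+1), show (0+(j+1) : ℕ) = j+1 from by omega,
        (affCS r).wordProd_append, wordProd_single]
    have hD : (affCS r).wordProd ((ascFin r (2*r+1-(j+1)) (j+1)).reverse)
        = (affCS r).wordProd ((ascFin r (2*r+1-j) j).reverse) * sgen r (2*r-j) := by
      rw [show 2*r+1-(j+1) = 2*r-j from by omega, ascFin_cons (2*r-j) j,
        show 2*r-j+1 = 2*r+1-j from by omega, List.reverse_cons,
        (affCS r).wordProd_append, wordProd_single]
    rw [hA, hD]
    have hcomm := comm_ascFin_rev (sgen r (j+1)) (2*r+1-j) j (fun i h1 h2 => sgen_comm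
      (by omega) (by omega) (by omega) (by omega) (by omega) (by omega) (by omega))
    set A := (affCS r).wordProd (ascFin r 0 (j+1))
    set D := (affCS r).wordProd ((ascFin r (2*r+1-j) j).reverse)
    set x := sgen r (j+1)
    set z := sgen r (2*r-j)
    calc A * D * (x * z) = A * (x * D) * z := by rw [hcomm]; group
    _ = A * x * (D * z) := by group

lemma B_eq (hr : 3 ≤ r) : fullBlockEl r = AEl r * CEl r := by
  rw [fullBlockEl, fullBlockWord]
  have e1 : ascSeq 0 r = ascSeq 0 (r-1) ++ [r] := by
    rw [ascSeq, ascSeq, show r+1-0 = (r-1+1)+1 from by omega, List.range'_1_concat,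
      show r-1+1-0 = r-1+1 from rfl, show 0+(r-1+1) = r from by omega]
  have hrr : rword r r = [((r:ℕ) : Fin (2*r+1)), ((r+1:ℕ) : Fin (2*r+1)), ((r:ℕ) : Fin (2*r+1))] := by
    simp only [rword]
    rw [if_neg (by omega), if_neg (by omega)]
  rw [e1, List.map_append, List.flatten_append, (affCS r).wordProd_append,
    prefixP (r-1) (by omega)]
  simp only [List.map_cons, List.map_nil, List.flatten_cons, List.flatten_nil, List.append_nil]
  rw [hrr, (affCS r).wordProd_cons, wordProd_pair,
    show ((affCS r).simple ((r:ℕ) : Fin (2*r+1))) = sgen r r from rfl,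
    show r-1+1 = r from by omega, show 2*r+1-(r-1) = r+2 from by omega]
  have hA : AEl r = (affCS r).wordProd (ascFin r 0 r) * sgen r r := by
    rw [AEl, ascFin_concat 0 r, show (0+r : ℕ) = r from by omega,
      (affCS r).wordProd_append, wordProd_single]
  have hC : CEl r = (affCS r).wordProd ((ascFin r (r+2) (r-1)).reverse)
      * (sgen r (r+1) * sgen r r) := by
    rw [CEl, ascFin_split r (r+2) (r+1) (by omega) (by omega),
      show r+2-r = 2 from by omega, show r+(r+1)-(r+2) = r-1 from by omega,
      List.reverse_append, (affCS r).wordProd_append, ascFin_two]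
    rw [show ([((r:ℕ) : Fin (2*r+1)), ((r+1:ℕ) : Fin (2*r+1))]).reverse
      = [((r+1:ℕ) : Fin (2*r+1)), ((r:ℕ) : Fin (2*r+1))] from rfl, wordProd_pair]
  have hcomm := comm_ascFin_rev (sgen r r) (r+2) (r-1) (fun i h1 h2 => sgen_comm
    (by omega) (by omega) (by omega) (by omega) (by omega) (by omega) (by omega))
  rw [hA, hC]
  set A0 := (affCS r).wordProd (ascFin r 0 r)
  set D := (affCS r).wordProd ((ascFin r (r+2) (r-1)).reverse)
  set x := sgen r r
  set y := sgen r (r+1)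
  calc A0 * D * (x * (y * x)) = A0 * (x * D) * (y * x) := by rw [hcomm]; group
  _ = A0 * x * (D * (y * x)) := by group

lemma key_step (k : ℕ) (hr : 3 ≤ r) (h1 : 1 ≤ k) (h2 : k + 2 ≤ r) :
    rgen r (k+1) * fullBlockEl r = fullBlockEl r * rgen r k := by
  have hrg1 : rgen r (k+1) = sgen r (k+1) * sgen r (2*r-k) := by
    rw [rgen]
    simp only [rword]
    rw [if_neg (by omega), if_pos (by omega), show 2*r+1-(k+1) = 2*r-k from by omega,
      wordProd_pair]
  have hrg2 : rgen r k = sgen r k * sgen r (2*r+1-k) := by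
    rw [rgen]
    simp only [rword]
    rw [if_neg (by omega), if_pos (by omega), wordProd_pair]
  have hHA : sgen r (2*r-k) * AEl r = AEl r * sgen r (2*r-k) := by
    rw [AEl]
    exact comm_ascFin (sgen r (2*r-k)) 0 (r+1) (fun m hm1 hm2 => sgen_comm
      (by omega) (by omega) (by omega) (by omega) (by omega) (by omega) (by omega))
  have hsk : sgen r k * CEl r = CEl r * sgen r k := by
    rw [CEl]
    exact comm_ascFin_rev (sgen r k) r (r+1) (fun m hm1 hm2 => sgen_comm
      (by omega) (by omega) (by omega) (by omega) (by omega) (by omega) (by omega))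
  have h4 := asc_shift (r := r) k (by omega) (by omega)
  have h5 := desc_shift (r := r) (2*r-k) (by omega) (by omega)
  rw [show 2*r-k+1 = 2*r+1-k from by omega] at h5
  rw [B_eq hr, hrg1, hrg2]
  set x1 := sgen r (k+1)
  set x2 := sgen r (2*r-k)
  set z1 := sgen r k
  set z2 := sgen r (2*r+1-k)
  set A := AEl r
  set C := CEl r
  calc (x1 * x2) * (A * C) = x1 * (x2 * A) * C := by group
  _ = x1 * (A * x2) * C := by rw [hHA]
  _ = (x1 * A) * (x2 * C) := by group
  _ = (A * z1) * (C * z2) := by rw [h4, h5]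
  _ = A * (z1 * C) * z2 := by group
  _ = A * (C * z1) * z2 := by rw [hsk]
  _ = (A * C) * (z1 * z2) := by group

lemma aux_conj (hr : 3 ≤ r) : ∀ l, 1 ≤ l → l ≤ r - 2 →
    rgen r (r-1) * fullBlockEl r ^ l = fullBlockEl r ^ l * rgen r (r-1-l) := by
  intro l
  induction l with
  | zero => intro h _; omega
  | succ n ih =>
    intro _ h2
    rcases Nat.eq_zero_or_pos n with rfl | hn
    · rw [pow_one, show r-1-1 = r-2 from by omega]
      have h := key_step (r-2) hr (by omega) (by omega)
      rw [show r-2+1 = r-1 from by omega] at h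
      exact h
    · have ihh := ih (by omega) (by omega)
      have hkey := key_step (r-2-n) hr (by omega) (by omega)
      rw [show r-2-n+1 = r-1-n from by omega] at hkey
      calc rgen r (r-1) * fullBlockEl r ^ (n+1)
          = (rgen r (r-1) * fullBlockEl r ^ n) * fullBlockEl r := by rw [pow_succ, mul_assoc]
      _ = fullBlockEl r ^ n * (rgen r (r-1-n) * fullBlockEl r) := by rw [ihh, mul_assoc]
      _ = fullBlockEl r ^ n * (fullBlockEl r * rgen r (r-2-n)) := by rw [hkey]
      _ = fullBlockEl r ^ (n+1) * rgen r (r-1-(n+1)) := by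
          rw [pow_succ, show r-1-(n+1) = r-2-n from by omega, mul_assoc]


end Aff


/-- For `r ≥ 3` and `1 ≤ l ≤ r-2`, one has
`r_{r-1} · (r_0 r_1 ⋯ r_{r-1} r_r)^l = (r_0 r_1 ⋯ r_{r-1} r_r)^l · r_{r-l-1}` in `W`. -/
theorem statement4 (r l : ℕ) (hr : 3 ≤ r) (hl1 : 1 ≤ l) (hl2 : l ≤ r - 2) :
    rgen r (r - 1) * (fullBlockEl r) ^ l = (fullBlockEl r) ^ l * rgen r (r - l - 1) := by
  have h := aux_conj hr l hl1 hl2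
  rw [show r - 1 - l = r - l - 1 from by omega] at h
  exact h
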